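/- For an integer n ≥ 2, define Z_n := (∏_{i=2}^{n} ζ(i))^{−1} · ∏_{p prime} (1 + p^{−2} + p^{−3} + ⋯ + p^{−n}). Then: (a) Z_2 = 1/ζ(4); (b) ∏_{p prime} (1 + p^{−2} + p^{−3} + p^{−4} + ⋯) = ζ(2)ζ(3)/ζ(6), where the inner sum is the full geometric tail Σ_{i=2}^{∞} p^{−i}; and (c) lim_{n→∞} Z_n = 1/(ζ(6) · ∏_{i=4}^{∞} ζ(i)). -/

import Mathlib

open Filter

/-- `ζ(i) = ∑_{j=1}^{∞} j⁻ⁱ`. -/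
noncomputable def zetaR (i : ℕ) : ℝ := ∑' j : ℕ+, ((j : ℝ) ^ i)⁻¹

/-- `Z_n = (∏_{i=2}^{n} ζ(i))⁻¹ · ∏_{p prime} (1 + p⁻² + p⁻³ + ⋯ + p⁻ⁿ)`. -/
noncomputable def Z (n : ℕ) : ℝ :=
  (∏ i ∈ Finset.Icc 2 n, zetaR i)⁻¹ *
    ∏' p : Nat.Primes, (1 + ∑ i ∈ Finset.Icc 2 n, (((p : ℕ) : ℝ) ^ i)⁻¹)

open Real

section helpers

/-- `n ↦ (n^(k+1))⁻¹` as a monoid-with-zero hom. -/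
noncomputable def ef (k : ℕ) : ℕ →*₀ ℝ where
  toFun n := ((n : ℝ) ^ (k + 1))⁻¹
  map_zero' := by simp
  map_one' := by simp
  map_mul' m n := by push_cast; rw [mul_pow, mul_inv]

lemma summable_pow_inv {k : ℕ} (hk : 2 ≤ k) : Summable (fun n : ℕ => ((n : ℝ) ^ k)⁻¹) :=
  Real.summable_nat_pow_inv.mpr hk

lemma zetaR_eq {k : ℕ} (hk : 1 ≤ k) : zetaR k = ∑' n : ℕ, ((n : ℝ) ^ k)⁻¹ := by
  have h := Function.Injective.tsum_eq (g := fun j : ℕ+ => (j : ℕ))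
    (f := fun n : ℕ => ((n : ℝ) ^ k)⁻¹) (fun a b h => PNat.coe_injective h) ?_
  · rw [← h]; rfl
  · intro n hn
    rcases Nat.eq_zero_or_pos n with rfl | hpos
    · exfalso; apply hn; simp [zero_pow (by omega : k ≠ 0)]
    · exact ⟨⟨n, hpos⟩, rfl⟩

lemma one_le_zetaR {k : ℕ} (hk : 2 ≤ k) : 1 ≤ zetaR k := by
  rw [zetaR_eq (by omega)]
  have h := Summable.le_tsum (summable_pow_inv hk) 1 (fun n _ => by positivity)
  simpa using h

lemma zetaR_pos {k : ℕ} (hk : 2 ≤ k) : 0 < zetaR k := lt_of_lt_of_le one_pos (one_le_zetaR hk)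

lemma zetaR_ne {k : ℕ} (hk : 2 ≤ k) : zetaR k ≠ 0 := (zetaR_pos hk).ne'

lemma hasProd_euler {k : ℕ} (hk : 2 ≤ k) :
    HasProd (fun p : Nat.Primes => (1 - (((p : ℕ) : ℝ) ^ k)⁻¹)⁻¹) (zetaR k) := by
  obtain ⟨j, rfl⟩ : ∃ j, k = j + 1 := ⟨k - 1, by omega⟩
  have hsum : Summable (fun n => ‖ef j n‖) := by
    have := summable_pow_inv hk
    refine this.congr fun n => ?_
    have he : ef j n = ((n : ℝ) ^ (j + 1))⁻¹ := rfl
    rw [Real.norm_eq_abs, he, abs_of_nonneg (by positivity)]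
  have H := EulerProduct.eulerProduct_completely_multiplicative_hasProd hsum
  have he : (∑' n : ℕ, ef j n) = zetaR (j + 1) := by
    rw [zetaR_eq (by omega)]; rfl
  rw [he] at H
  exact H

end helpers
section logstuff
open Real

lemma tprod_eq_exp {ι : Type*} {f : ι → ℝ} (hpos : ∀ i, 0 < f i)
    (h : Summable fun i => log (f i)) :
    ∏' i, f i = exp (∑' i, log (f i)) := by
  have H := h.hasSum.rexp
  have hfun : (rexp ∘ fun i => log (f i)) = f := funext fun i => exp_log (hpos i)
  rw [hfun] at H
  exact H.tprod_eq

-- basic facts about r := (p : ℝ) ≥ 2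
lemma pr_two_le (p : Nat.Primes) : (2 : ℝ) ≤ ((p : ℕ) : ℝ) := by
  exact_mod_cast p.prop.two_le

lemma pow_inv_le_half {r : ℝ} (hr : 2 ≤ r) {k : ℕ} (hk : 1 ≤ k) : (r ^ k)⁻¹ ≤ 2⁻¹ := by
  have h2 : (2 : ℝ) ≤ r ^ k := le_trans hr (le_self_pow₀ (by linarith) (by omega))
  exact inv_anti₀ (by norm_num) h2

lemma one_sub_pos' {r : ℝ} (hr : 2 ≤ r) {k : ℕ} (hk : 1 ≤ k) : 0 < 1 - (r ^ k)⁻¹ := by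
  have := pow_inv_le_half hr hk; linarith

lemma log_inv_one_sub_nonneg {x : ℝ} (h0 : 0 ≤ x) (h : x ≤ 2⁻¹) : 0 ≤ log (1 - x)⁻¹ := by
  apply Real.log_nonneg
  rw [le_inv_comm₀ one_pos (by linarith)]
  linarith

lemma log_inv_one_sub_le {x : ℝ} (h0 : 0 ≤ x) (h : x ≤ 2⁻¹) : log (1 - x)⁻¹ ≤ 2 * x := by
  have h1 : (0 : ℝ) < 1 - x := by linarith
  have h3 : (1 - x)⁻¹ ≤ 1 + 2 * x := by
    rw [inv_eq_one_div, div_le_iff₀ h1]; nlinarith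
  have := Real.log_le_sub_one_of_pos (inv_pos.mpr h1)
  linarith

lemma summable_primes_sq : Summable fun p : Nat.Primes => (((p : ℕ) : ℝ) ^ 2)⁻¹ :=
  (summable_pow_inv le_rfl).comp_injective (fun a b h => Nat.Primes.coe_nat_injective h)

lemma summable_log_euler {k : ℕ} (hk : 2 ≤ k) :
    Summable fun p : Nat.Primes => log (1 - (((p : ℕ) : ℝ) ^ k)⁻¹)⁻¹ := by
  refine Summable.of_nonneg_of_le (fun p => ?_) (fun p => ?_) (summable_primes_sq.mul_left 2)
  · exact log_inv_one_sub_nonneg (by positivity) (pow_inv_le_half (pr_two_le p) (by omega))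
  · refine le_trans (log_inv_one_sub_le (by positivity)
      (pow_inv_le_half (pr_two_le p) (by omega))) ?_
    have hr := pr_two_le p
    have : (((p : ℕ) : ℝ) ^ k)⁻¹ ≤ (((p : ℕ) : ℝ) ^ 2)⁻¹ := by
      apply inv_anti₀ (by positivity)
      exact pow_le_pow_right₀ (by linarith) hk
    linarith

lemma tsum_log_euler {k : ℕ} (hk : 2 ≤ k) :
    (∑' p : Nat.Primes, log (1 - (((p : ℕ) : ℝ) ^ k)⁻¹)⁻¹) = log (zetaR k) := by
  have h1 := (hasProd_euler hk).tprod_eq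
  have h2 := tprod_eq_exp (f := fun p : Nat.Primes => (1 - (((p : ℕ) : ℝ) ^ k)⁻¹)⁻¹)
    (fun p => inv_pos.mpr (one_sub_pos' (pr_two_le p) (by omega))) (summable_log_euler hk)
  rw [h2] at h1
  rw [← h1, Real.log_exp]

end logstuff

section perprime
open Real

lemma summable_geom {r : ℝ} (hr : 2 ≤ r) : Summable fun i : ℕ => (r ^ (i + 2))⁻¹ := by
  have h0 : (0 : ℝ) ≤ r⁻¹ := by positivity
  have h1 : r⁻¹ < 1 := by
    rw [inv_lt_one_iff₀]; right; linarith
  have := (summable_geometric_of_lt_one h0 h1).mul_left (r ^ 2)⁻¹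
  refine this.congr fun i => ?_
  rw [pow_add, mul_inv, inv_pow]; ring

lemma tsum_geom {r : ℝ} (hr : 2 ≤ r) :
    ∑' i : ℕ, (r ^ (i + 2))⁻¹ = (r ^ 2)⁻¹ * (1 - r⁻¹)⁻¹ := by
  have h0 : (0 : ℝ) ≤ r⁻¹ := by positivity
  have h1 : r⁻¹ < 1 := by rw [inv_lt_one_iff₀]; right; linarith
  calc ∑' i : ℕ, (r ^ (i + 2))⁻¹ = ∑' i : ℕ, (r ^ 2)⁻¹ * (r⁻¹) ^ i := by
        refine tsum_congr fun i => ?_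
        rw [pow_add, mul_inv, inv_pow, mul_comm]
    _ = (r ^ 2)⁻¹ * ∑' i : ℕ, (r⁻¹) ^ i := tsum_mul_left
    _ = (r ^ 2)⁻¹ * (1 - r⁻¹)⁻¹ := by rw [tsum_geometric_of_lt_one h0 h1]

lemma logA {r : ℝ} (hr : 2 ≤ r) :
    log (1 + (r ^ 2)⁻¹) = log (1 - (r ^ 2)⁻¹)⁻¹ - log (1 - (r ^ 4)⁻¹)⁻¹ := by
  have h2 : 0 < 1 - (r ^ 2)⁻¹ := one_sub_pos' hr (by norm_num)
  have h4 : 0 < 1 - (r ^ 4)⁻¹ := one_sub_pos' hr (by norm_num)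
  have hr0 : r ≠ 0 := by linarith
  have hid : 1 + (r ^ 2)⁻¹ = (1 - (r ^ 4)⁻¹) / (1 - (r ^ 2)⁻¹) := by
    rw [eq_div_iff h2.ne']
    field_simp
    ring
  rw [hid, Real.log_div h4.ne' h2.ne']
  simp only [Real.log_inv]
  ring

lemma logB {r : ℝ} (hr : 2 ≤ r) :
    log (1 + (r ^ 2)⁻¹ * (1 - r⁻¹)⁻¹) =
      log (1 - (r ^ 2)⁻¹)⁻¹ + log (1 - (r ^ 3)⁻¹)⁻¹ - log (1 - (r ^ 6)⁻¹)⁻¹ := by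
  have h1 : 0 < 1 - r⁻¹ := by
    have : (r ^ 1)⁻¹ ≤ 2⁻¹ := pow_inv_le_half hr le_rfl
    rw [pow_one] at this; linarith
  have h2 : 0 < 1 - (r ^ 2)⁻¹ := one_sub_pos' hr (by norm_num)
  have h3 : 0 < 1 - (r ^ 3)⁻¹ := one_sub_pos' hr (by norm_num)
  have h6 : 0 < 1 - (r ^ 6)⁻¹ := one_sub_pos' hr (by norm_num)
  have hr0 : r ≠ 0 := by linarith
  have hid : 1 + (r ^ 2)⁻¹ * (1 - r⁻¹)⁻¹ =
      (1 - (r ^ 6)⁻¹) / ((1 - (r ^ 2)⁻¹) * (1 - (r ^ 3)⁻¹)) := by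
    have h1' : r - 1 ≠ 0 := by nlinarith
    have hrw : (1 - r⁻¹)⁻¹ = r * (r - 1)⁻¹ := by
      have hh : 1 - r⁻¹ = (r - 1) / r := by field_simp
      rw [hh, inv_div, div_eq_mul_inv]
    rw [hrw, eq_div_iff (by positivity)]
    field_simp
    ring
  rw [hid, Real.log_div h6.ne' (by positivity), Real.log_mul h2.ne' h3.ne']
  simp only [Real.log_inv]
  ring

end perprime

section partsAB
open Real

lemma summable_logA :
    Summable fun p : Nat.Primes => log (1 + (((p : ℕ) : ℝ) ^ 2)⁻¹) :=
  ((summable_log_euler le_rfl).sub (summable_log_euler (by norm_num : 2 ≤ 4))).congr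
    fun p => (logA (pr_two_le p)).symm

lemma tsum_logA :
    ∑' p : Nat.Primes, log (1 + (((p : ℕ) : ℝ) ^ 2)⁻¹) = log (zetaR 2) - log (zetaR 4) := by
  rw [tsum_congr fun p => logA (pr_two_le p),
    Summable.tsum_sub (summable_log_euler le_rfl) (summable_log_euler (by norm_num)),
    tsum_log_euler le_rfl, tsum_log_euler (by norm_num)]

lemma Gpos {r : ℝ} (hr : 2 ≤ r) : 0 < 1 + (r ^ 2)⁻¹ * (1 - r⁻¹)⁻¹ := by
  have h1 : (0:ℝ) < 1 - r⁻¹ := by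
    have := pow_inv_le_half hr (le_refl 1); rw [pow_one] at this; linarith
  positivity

lemma summable_logG :
    Summable fun p : Nat.Primes =>
      log (1 + (((p : ℕ) : ℝ) ^ 2)⁻¹ * (1 - ((p : ℕ) : ℝ)⁻¹)⁻¹) :=
  (((summable_log_euler le_rfl).add (summable_log_euler (by norm_num : 2 ≤ 3))).sub
    (summable_log_euler (by norm_num : 2 ≤ 6))).congr fun p => (logB (pr_two_le p)).symm

lemma tsum_logG :
    ∑' p : Nat.Primes, log (1 + (((p : ℕ) : ℝ) ^ 2)⁻¹ * (1 - ((p : ℕ) : ℝ)⁻¹)⁻¹) =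
      log (zetaR 2) + log (zetaR 3) - log (zetaR 6) := by
  rw [tsum_congr fun p => logB (pr_two_le p),
    Summable.tsum_sub ((summable_log_euler le_rfl).add (summable_log_euler (by norm_num)))
      (summable_log_euler (by norm_num)),
    Summable.tsum_add (summable_log_euler le_rfl) (summable_log_euler (by norm_num)),
    tsum_log_euler le_rfl, tsum_log_euler (by norm_num : (2:ℕ) ≤ 3),
    tsum_log_euler (by norm_num : (2:ℕ) ≤ 6)]

lemma tprodG :
    ∏' p : Nat.Primes, (1 + (((p : ℕ) : ℝ) ^ 2)⁻¹ * (1 - ((p : ℕ) : ℝ)⁻¹)⁻¹) =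
      zetaR 2 * zetaR 3 / zetaR 6 := by
  rw [tprod_eq_exp (fun p => Gpos (pr_two_le p)) summable_logG, tsum_logG,
    Real.exp_sub, Real.exp_add, Real.exp_log (zetaR_pos le_rfl),
    Real.exp_log (zetaR_pos (by norm_num)), Real.exp_log (zetaR_pos (by norm_num))]

lemma partB :
    ∏' p : Nat.Primes, (1 + ∑' i : ℕ, (((p : ℕ) : ℝ) ^ (i + 2))⁻¹) =
      zetaR 2 * zetaR 3 / zetaR 6 := by
  rw [← tprodG]
  exact tprod_congr fun p => by rw [tsum_geom (pr_two_le p)]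

lemma tprodA :
    ∏' p : Nat.Primes, (1 + (((p : ℕ) : ℝ) ^ 2)⁻¹) = zetaR 2 / zetaR 4 := by
  rw [tprod_eq_exp (fun p => by positivity) summable_logA, tsum_logA,
    Real.exp_sub, Real.exp_log (zetaR_pos le_rfl), Real.exp_log (zetaR_pos (by norm_num))]

lemma partA : Z 2 = (zetaR 4)⁻¹ := by
  have h : ∀ p : Nat.Primes,
      (1 + ∑ i ∈ Finset.Icc 2 2, (((p : ℕ) : ℝ) ^ i)⁻¹) = 1 + (((p : ℕ) : ℝ) ^ 2)⁻¹ := by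
    intro p; rw [Finset.Icc_self, Finset.sum_singleton]
  rw [Z, tprod_congr h, tprodA, Finset.Icc_self, Finset.prod_singleton]
  field_simp
  rw [div_mul_eq_div_div, div_self (zetaR_ne le_rfl)]

end partsAB

section partC
open Real Filter

lemma icc_sum_eq {M : Type*} [AddCommMonoid M] (f : ℕ → M) (n : ℕ) :
    ∑ i ∈ Finset.Icc 2 n, f i = ∑ i ∈ Finset.range (n - 1), f (i + 2) := by
  rw [← Finset.Ico_add_one_right_eq_Icc, Finset.sum_Ico_eq_sum_range]
  have h : n + 1 - 2 = n - 1 := by omega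
  rw [h]
  exact Finset.sum_congr rfl fun i _ => by rw [add_comm]

lemma summable_shift {k : ℕ} (hk : 2 ≤ k) :
    Summable fun n : ℕ => (((n : ℝ) + 2) ^ k)⁻¹ := by
  have h := (summable_nat_add_iff (f := fun n : ℕ => ((n : ℝ) ^ k)⁻¹) 2).mpr
    (summable_pow_inv hk)
  exact h.congr fun n => by push_cast; ring_nf

lemma zetaR_tail {k : ℕ} (hk : 2 ≤ k) :
    zetaR k = 1 + ∑' n : ℕ, (((n : ℝ) + 2) ^ k)⁻¹ := by
  rw [zetaR_eq (by omega)]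
  have h := Summable.sum_add_tsum_nat_add (f := fun n : ℕ => ((n : ℝ) ^ k)⁻¹) 2 (summable_pow_inv hk)
  rw [← h, Finset.sum_range_succ, Finset.sum_range_one]
  have h0 : ((0 : ℕ) : ℝ) ^ k = 0 := by rw [Nat.cast_zero, zero_pow (by omega : k ≠ 0)]
  rw [h0]
  simp only [inv_zero, zero_add, Nat.cast_one, one_pow, inv_one]
  congr 1
  exact tsum_congr fun n => by push_cast; ring_nf

lemma zetaR_sub_one_le (i : ℕ) : zetaR (i + 2) - 1 ≤ (2⁻¹ : ℝ) ^ i * zetaR 2 := by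
  rw [zetaR_tail (by omega : 2 ≤ i + 2), add_sub_cancel_left]
  have step : ∀ n : ℕ, (((n : ℝ) + 2) ^ (i + 2))⁻¹ ≤ (2⁻¹ : ℝ) ^ i * (((n : ℝ) + 2) ^ 2)⁻¹ := by
    intro n
    have hn2 : (2 : ℝ) ≤ (n : ℝ) + 2 := by
      have := Nat.cast_nonneg (α := ℝ) n; linarith
    have hpos : (0 : ℝ) < ((n : ℝ) + 2) ^ 2 := by positivity
    have hle : (2 : ℝ) ^ i * ((n : ℝ) + 2) ^ 2 ≤ ((n : ℝ) + 2) ^ (i + 2) := by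
      rw [pow_add]
      exact mul_le_mul_of_nonneg_right (pow_le_pow_left₀ (by norm_num) hn2 i) hpos.le
    calc (((n : ℝ) + 2) ^ (i + 2))⁻¹ ≤ ((2 : ℝ) ^ i * ((n : ℝ) + 2) ^ 2)⁻¹ := by
          apply inv_anti₀ (by positivity) hle
      _ = (2⁻¹ : ℝ) ^ i * (((n : ℝ) + 2) ^ 2)⁻¹ := by rw [mul_inv, inv_pow]
  have hsum2 : Summable fun n : ℕ => (2⁻¹ : ℝ) ^ i * (((n : ℝ) + 2) ^ 2)⁻¹ :=
    (summable_shift le_rfl).mul_left _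
  calc ∑' n : ℕ, (((n : ℝ) + 2) ^ (i + 2))⁻¹
      ≤ ∑' n : ℕ, (2⁻¹ : ℝ) ^ i * (((n : ℝ) + 2) ^ 2)⁻¹ :=
        Summable.tsum_le_tsum step (summable_shift (by omega)) hsum2
    _ = (2⁻¹ : ℝ) ^ i * ∑' n : ℕ, (((n : ℝ) + 2) ^ 2)⁻¹ := tsum_mul_left
    _ ≤ (2⁻¹ : ℝ) ^ i * zetaR 2 := by
        apply mul_le_mul_of_nonneg_left ?_ (by positivity)
        have := zetaR_tail (le_refl 2)
        nlinarith [tsum_nonneg (L := SummationFilter.unconditional ℕ) (fun n : ℕ => by positivity :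
          ∀ n : ℕ, (0:ℝ) ≤ (((n : ℝ) + 2) ^ 2)⁻¹)]

lemma summable_logzeta : Summable fun i : ℕ => log (zetaR (i + 2)) := by
  refine Summable.of_nonneg_of_le (fun i => log_nonneg (one_le_zetaR (by omega)))
    (fun i => ?_) ((summable_geometric_of_lt_one (by norm_num) (by norm_num :
      (2⁻¹ : ℝ) < 1)).mul_right (zetaR 2))
  have h1 := log_le_sub_one_of_pos (zetaR_pos (by omega : 2 ≤ i + 2))
  have h2 := zetaR_sub_one_le i
  linarith

lemma summable_logzeta4 : Summable fun i : ℕ => log (zetaR (i + 4)) := by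
  have := (summable_nat_add_iff (f := fun i : ℕ => log (zetaR (i + 2))) 2).mpr summable_logzeta
  exact this.congr fun i => by norm_num

end partC

section partC2
open Real Filter

lemma F_pos (n : ℕ) (p : Nat.Primes) :
    0 < 1 + ∑ i ∈ Finset.Icc 2 n, (((p : ℕ) : ℝ) ^ i)⁻¹ :=
  lt_of_lt_of_le one_pos (le_add_of_nonneg_right (Finset.sum_nonneg fun i _ => by positivity))

lemma F_le_G (n : ℕ) (p : Nat.Primes) :
    ∑ i ∈ Finset.Icc 2 n, (((p : ℕ) : ℝ) ^ i)⁻¹ ≤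
      (((p : ℕ) : ℝ) ^ 2)⁻¹ * (1 - ((p : ℕ) : ℝ)⁻¹)⁻¹ := by
  have hr := pr_two_le p
  rw [icc_sum_eq, ← tsum_geom hr]
  exact Summable.sum_le_tsum _ (fun i _ => by positivity) (summable_geom hr)

lemma logF_nonneg (n : ℕ) (p : Nat.Primes) :
    0 ≤ log (1 + ∑ i ∈ Finset.Icc 2 n, (((p : ℕ) : ℝ) ^ i)⁻¹) :=
  log_nonneg (le_add_of_nonneg_right (Finset.sum_nonneg fun i _ => by positivity))

lemma G_sub_le (p : Nat.Primes) :
    (((p : ℕ) : ℝ) ^ 2)⁻¹ * (1 - ((p : ℕ) : ℝ)⁻¹)⁻¹ ≤ 2 * (((p : ℕ) : ℝ) ^ 2)⁻¹ := by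
  have hr := pr_two_le p
  have h1 : (2 : ℝ)⁻¹ ≤ 1 - ((p : ℕ) : ℝ)⁻¹ := by
    have := pow_inv_le_half hr (le_refl 1); rw [pow_one] at this; linarith
  have h2 : (1 - ((p : ℕ) : ℝ)⁻¹)⁻¹ ≤ 2 := by
    have h3 := inv_anti₀ (by norm_num : (0 : ℝ) < 2⁻¹) h1
    rwa [inv_inv] at h3
  calc (((p : ℕ) : ℝ) ^ 2)⁻¹ * (1 - ((p : ℕ) : ℝ)⁻¹)⁻¹
      ≤ (((p : ℕ) : ℝ) ^ 2)⁻¹ * 2 := mul_le_mul_of_nonneg_left h2 (by positivity)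
    _ = 2 * (((p : ℕ) : ℝ) ^ 2)⁻¹ := mul_comm _ _

lemma logF_le_bound (n : ℕ) (p : Nat.Primes) :
    log (1 + ∑ i ∈ Finset.Icc 2 n, (((p : ℕ) : ℝ) ^ i)⁻¹) ≤ 2 * (((p : ℕ) : ℝ) ^ 2)⁻¹ := by
  have h1 := log_le_sub_one_of_pos (F_pos n p)
  have h2 := F_le_G n p
  have h3 := G_sub_le p
  linarith

lemma summable_logF (n : ℕ) :
    Summable fun p : Nat.Primes => log (1 + ∑ i ∈ Finset.Icc 2 n, (((p : ℕ) : ℝ) ^ i)⁻¹) :=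
  Summable.of_nonneg_of_le (logF_nonneg n) (logF_le_bound n) (summable_primes_sq.mul_left 2)

lemma tendsto_logF (p : Nat.Primes) :
    Tendsto (fun n => log (1 + ∑ i ∈ Finset.Icc 2 n, (((p : ℕ) : ℝ) ^ i)⁻¹)) atTop
      (nhds (log (1 + (((p : ℕ) : ℝ) ^ 2)⁻¹ * (1 - ((p : ℕ) : ℝ)⁻¹)⁻¹))) := by
  have hr := pr_two_le p
  have hF : Tendsto (fun n => 1 + ∑ i ∈ Finset.Icc 2 n, (((p : ℕ) : ℝ) ^ i)⁻¹) atTop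
      (nhds (1 + (((p : ℕ) : ℝ) ^ 2)⁻¹ * (1 - ((p : ℕ) : ℝ)⁻¹)⁻¹)) := by
    rw [← tsum_geom hr]
    have h2 := (summable_geom hr).hasSum.tendsto_sum_nat.comp (tendsto_sub_atTop_nat 1)
    exact tendsto_const_nhds.add
      (h2.congr fun n => (icc_sum_eq (fun i => (((p : ℕ) : ℝ) ^ i)⁻¹) n).symm)
  exact hF.log (Gpos hr).ne'

lemma tendsto_T :
    Tendsto (fun n => ∑' p : Nat.Primes,
        log (1 + ∑ i ∈ Finset.Icc 2 n, (((p : ℕ) : ℝ) ^ i)⁻¹)) atTop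
      (nhds (log (zetaR 2) + log (zetaR 3) - log (zetaR 6))) := by
  rw [← tsum_logG]
  refine tendsto_tsum_of_dominated_convergence
    (bound := fun p : Nat.Primes => 2 * (((p : ℕ) : ℝ) ^ 2)⁻¹)
    (summable_primes_sq.mul_left 2) (fun p => tendsto_logF p) ?_
  filter_upwards with n p
  rw [Real.norm_eq_abs, abs_of_nonneg (logF_nonneg n p)]
  exact logF_le_bound n p

lemma tendsto_S :
    Tendsto (fun n => ∑ i ∈ Finset.Icc 2 n, log (zetaR i)) atTop
      (nhds (∑' i : ℕ, log (zetaR (i + 2)))) := by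
  have h2 := summable_logzeta.hasSum.tendsto_sum_nat.comp (tendsto_sub_atTop_nat 1)
  exact h2.congr fun n => (icc_sum_eq (fun i => log (zetaR i)) n).symm

lemma Z_eq (n : ℕ) : Z n = exp
    ((∑' p : Nat.Primes, log (1 + ∑ i ∈ Finset.Icc 2 n, (((p : ℕ) : ℝ) ^ i)⁻¹)) -
      ∑ i ∈ Finset.Icc 2 n, log (zetaR i)) := by
  have hprod : ∏ i ∈ Finset.Icc 2 n, zetaR i = exp (∑ i ∈ Finset.Icc 2 n, log (zetaR i)) := by
    rw [Real.exp_sum]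
    exact Finset.prod_congr rfl fun i hi =>
      (Real.exp_log (zetaR_pos (Finset.mem_Icc.mp hi).1)).symm
  have htp := tprod_eq_exp
    (f := fun p : Nat.Primes => 1 + ∑ i ∈ Finset.Icc 2 n, (((p : ℕ) : ℝ) ^ i)⁻¹)
    (F_pos n) (summable_logF n)
  rw [Z, hprod, htp, ← Real.exp_neg, ← Real.exp_add, neg_add_eq_sub]

lemma partC : Tendsto Z atTop (nhds ((zetaR 6 * ∏' i : ℕ, zetaR (i + 4))⁻¹)) := by
  have hQ : ∏' i : ℕ, zetaR (i + 4) = exp (∑' i : ℕ, log (zetaR (i + 4))) :=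
    tprod_eq_exp (fun i => zetaR_pos (by omega)) summable_logzeta4
  have hsplit : ∑' i : ℕ, log (zetaR (i + 2)) =
      log (zetaR 2) + log (zetaR 3) + ∑' i : ℕ, log (zetaR (i + 4)) := by
    have h := Summable.sum_add_tsum_nat_add (f := fun i : ℕ => log (zetaR (i + 2))) 2 summable_logzeta
    rw [← h, Finset.sum_range_succ, Finset.sum_range_one]
  have hmain := tendsto_T.sub tendsto_S
  have hexp := (Real.continuous_exp.tendsto _).comp hmain
  have hval : exp ((log (zetaR 2) + log (zetaR 3) - log (zetaR 6)) -
      ∑' i : ℕ, log (zetaR (i + 2))) = (zetaR 6 * ∏' i : ℕ, zetaR (i + 4))⁻¹ := by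
    rw [hsplit, hQ, show (log (zetaR 2) + log (zetaR 3) - log (zetaR 6)) -
        (log (zetaR 2) + log (zetaR 3) + ∑' i : ℕ, log (zetaR (i + 4))) =
        -(log (zetaR 6) + ∑' i : ℕ, log (zetaR (i + 4))) by ring,
      Real.exp_neg, Real.exp_add, Real.exp_log (zetaR_pos (by norm_num))]
  rw [← hval]
  exact hexp.congr fun n => (Z_eq n).symm

end partC2

/-- (a) `Z_2 = 1/ζ(4)`; (b) `∏_p (1 + p⁻² + p⁻³ + ⋯) = ζ(2)ζ(3)/ζ(6)`;
(c) `lim_{n→∞} Z_n = 1/(ζ(6)·∏_{i=4}^{∞} ζ(i))`. -/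
theorem stmt15 :
    Z 2 = (zetaR 4)⁻¹ ∧
    (∏' p : Nat.Primes, (1 + ∑' i : ℕ, (((p : ℕ) : ℝ) ^ (i + 2))⁻¹) =
      zetaR 2 * zetaR 3 / zetaR 6) ∧
    Tendsto Z atTop (nhds (zetaR 6 * ∏' i : ℕ, zetaR (i + 4))⁻¹) :=
  ⟨partA, partB, partC⟩
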